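/- Let F be the n×n lower shift matrix and G = e₁. For every W ≻ 0 there exists a unique P ≻ 0 satisfying the discrete algebraic Riccati equation P − FᵀPF + FᵀPG(GᵀPG)⁻¹GᵀPF = W. -/

import Mathlib

open Matrix

open Filter Topology

namespace Stmt13Aux

variable {n : ℕ}

/-- bilinear form of a matrix -/
noncomputable def β (M : Matrix (Fin n) (Fin n) ℝ) (x y : Fin n → ℝ) : ℝ :=
  x ⬝ᵥ M *ᵥ y

lemma β_eq_sum (M : Matrix (Fin n) (Fin n) ℝ) (x y : Fin n → ℝ) :
    β M x y = ∑ i, ∑ j, x i * (M i j * y j) := by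
  simp [β, dotProduct, mulVec, Finset.mul_sum]

lemma β_comm {M : Matrix (Fin n) (Fin n) ℝ} (hM : Mᵀ = M) (x y : Fin n → ℝ) :
    β M x y = β M y x := by
  rw [β, dotProduct_mulVec, ← hM, vecMul_transpose, hM, β, dotProduct_comm]

lemma β_add_left (M : Matrix (Fin n) (Fin n) ℝ) (x x' y : Fin n → ℝ) :
    β M (x + x') y = β M x y + β M x' y := by
  simp [β, add_dotProduct]

lemma β_add_right (M : Matrix (Fin n) (Fin n) ℝ) (x y y' : Fin n → ℝ) :
    β M x (y + y') = β M x y + β M x y' := by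
  simp [β, mulVec_add, dotProduct_add]

lemma β_sub_right (M : Matrix (Fin n) (Fin n) ℝ) (x y y' : Fin n → ℝ) :
    β M x (y - y') = β M x y - β M x y' := by
  simp [β, mulVec_sub, dotProduct_sub]

lemma β_sub_left (M : Matrix (Fin n) (Fin n) ℝ) (x x' y : Fin n → ℝ) :
    β M (x - x') y = β M x y - β M x' y := by
  simp [β, sub_dotProduct]

lemma β_smul_left (M : Matrix (Fin n) (Fin n) ℝ) (c : ℝ) (x y : Fin n → ℝ) :
    β M (c • x) y = c * β M x y := by
  simp [β, smul_dotProduct]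

lemma β_smul_right (M : Matrix (Fin n) (Fin n) ℝ) (c : ℝ) (x y : Fin n → ℝ) :
    β M x (c • y) = c * β M x y := by
  simp [β, mulVec_smul, dotProduct_smul]

lemma β_sub_matrix (M N : Matrix (Fin n) (Fin n) ℝ) (x y : Fin n → ℝ) :
    β (M - N) x y = β M x y - β N x y := by
  simp [β, sub_mulVec, dotProduct_sub]

lemma β_single (M : Matrix (Fin n) (Fin n) ℝ) (i j : Fin n) :
    β M (Pi.single i 1) (Pi.single j 1) = M i j := by
  simp [β, dotProduct, mulVec, Pi.single_apply]


section FG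
variable (F : Matrix (Fin n) (Fin n) ℝ) (G : Matrix (Fin n) (Fin 1) ℝ)

/-- the column of `G` as a vector -/
def gv (G : Matrix (Fin n) (Fin 1) ℝ) : Fin n → ℝ := fun i => G i 0

lemma Gt_mulVec (v : Fin n → ℝ) : Gᵀ *ᵥ v = fun _ => gv G ⬝ᵥ v := by
  ext k
  have : k = 0 := Subsingleton.elim _ _
  subst this
  simp [mulVec, dotProduct, gv, transpose_apply]

lemma G_mulVec (w : Fin 1 → ℝ) : G *ᵥ w = w 0 • gv G := by
  ext i
  simp [mulVec, dotProduct, Fin.sum_univ_one, gv, mul_comm]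

lemma L1 (P : Matrix (Fin n) (Fin n) ℝ) (x y : Fin n → ℝ) :
    x ⬝ᵥ (Fᵀ * P * F) *ᵥ y = β P (F *ᵥ x) (F *ᵥ y) := by
  rw [← mulVec_mulVec, ← mulVec_mulVec, dotProduct_mulVec, vecMul_transpose, β]

lemma L3 (P : Matrix (Fin n) (Fin n) ℝ) :
    (Gᵀ * P * G) 0 0 = β P (gv G) (gv G) := by
  have h1 : (Gᵀ * P * G) *ᵥ (fun _ => (1:ℝ)) = Gᵀ *ᵥ (P *ᵥ (G *ᵥ fun _ => (1:ℝ))) := by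
    rw [← mulVec_mulVec, ← mulVec_mulVec]
  have h2 : ((Gᵀ * P * G) *ᵥ (fun _ => (1:ℝ))) 0 = (Gᵀ * P * G) 0 0 := by
    simp [mulVec, dotProduct, Fin.sum_univ_one]
  rw [← h2, h1, G_mulVec, Gt_mulVec]
  simp [β, gv]

lemma L2 (P : Matrix (Fin n) (Fin n) ℝ) (x y : Fin n → ℝ) :
    x ⬝ᵥ (Fᵀ * P * G * (Gᵀ * P * F)) *ᵥ y
      = β P (F *ᵥ x) (gv G) * β P (gv G) (F *ᵥ y) := by
  have h0 : (Fᵀ * P * G * (Gᵀ * P * F)) *ᵥ y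
      = (Fᵀ * P * G) *ᵥ ((Gᵀ * P * F) *ᵥ y) := by rw [← mulVec_mulVec]
  have h1 : (Gᵀ * P * F) *ᵥ y = Gᵀ *ᵥ (P *ᵥ (F *ᵥ y)) := by
    rw [← mulVec_mulVec, ← mulVec_mulVec]
  have h2 : (Fᵀ * P * G) *ᵥ ((Gᵀ * P * F) *ᵥ y)
      = Fᵀ *ᵥ (P *ᵥ (G *ᵥ ((Gᵀ * P * F) *ᵥ y))) := by
    rw [← mulVec_mulVec, ← mulVec_mulVec]
  rw [h0, h2, h1, Gt_mulVec, G_mulVec]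
  rw [dotProduct_mulVec, vecMul_transpose]
  simp only [mulVec_smul, dotProduct_smul]
  rw [β, β, smul_eq_mul, mul_comm]

end FG

section Shift
variable {F : Matrix (Fin n) (Fin n) ℝ}
  (hF : ∀ i j : Fin n, F i j = if (i : ℕ) = (j : ℕ) + 1 then 1 else 0)

include hF

lemma shift_mulVec (v : Fin n → ℝ) (i : Fin n) :
    (F *ᵥ v) i = if h : (i : ℕ) = 0 then 0 else v ⟨(i : ℕ) - 1, by omega⟩ := by
  rcases Nat.eq_zero_or_pos (i : ℕ) with h0 | h0
  · simp only [h0, dif_pos]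
    rw [mulVec, dotProduct]
    apply Finset.sum_eq_zero
    intro j _
    rw [hF]
    have : ¬ ((i:ℕ) = (j:ℕ) + 1) := by omega
    simp [this]
  · have hne : ¬ ((i:ℕ) = 0) := by omega
    simp only [hne, dif_neg, not_false_iff]
    rw [mulVec, dotProduct]
    have hlt : (i : ℕ) - 1 < n := by omega
    rw [Finset.sum_eq_single (⟨(i:ℕ)-1, hlt⟩ : Fin n)]
    · rw [hF]; simp; omega
    · intro j _ hj
      rw [hF]
      have : ¬ ((i:ℕ) = (j:ℕ) + 1) := by
        intro hc
        apply hj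
        apply Fin.ext
        simp; omega
      simp [this]
    · intro hc; exact absurd (Finset.mem_univ _) hc

lemma shift_iter_vanish (k : ℕ) (v : Fin n → ℝ) (i : Fin n) (hk : (i : ℕ) < k) :
    ((fun z => F *ᵥ z)^[k] v) i = 0 := by
  induction k generalizing i with
  | zero => omega
  | succ k ih =>
      rw [Function.iterate_succ_apply']
      rw [shift_mulVec hF]
      rcases Nat.eq_zero_or_pos (i : ℕ) with h0 | h0
      · simp [h0]
      · have hne : ¬ ((i:ℕ) = 0) := by omega
        simp only [hne, dif_neg, not_false_iff]
        exact ih _ (by simp; omega)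

lemma shift_iter_n (hn : 0 < n) (v : Fin n → ℝ) :
    ((fun z => F *ᵥ z)^[n] v) = 0 := by
  funext i
  exact shift_iter_vanish hF n v i i.isLt

end Shift

lemma gv_ne_zero {G : Matrix (Fin n) (Fin 1) ℝ} (hn : 0 < n)
    (hG : ∀ i : Fin n, G i 0 = if (i : ℕ) = 0 then 1 else 0) :
    (fun i => G i 0 : Fin n → ℝ) ≠ 0 := by
  intro h
  have := congrFun h ⟨0, hn⟩
  rw [hG] at this
  simp at this


section Amap
variable (F : Matrix (Fin n) (Fin n) ℝ) (G : Matrix (Fin n) (Fin 1) ℝ)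
  (P : Matrix (Fin n) (Fin n) ℝ)

noncomputable def dd : ℝ := β P (gv G) (gv G)

noncomputable def sv (x : Fin n → ℝ) : ℝ := β P (gv G) (F *ᵥ x)

noncomputable def Amap (x : Fin n → ℝ) : Fin n → ℝ :=
  F *ᵥ x - (sv F G P x / dd G P) • gv G

lemma dd_def : dd G P = β P (gv G) (gv G) := rfl
lemma sv_def (x : Fin n → ℝ) : sv F G P x = β P (gv G) (F *ᵥ x) := rfl

variable {P}

lemma key1 (hd : dd G P ≠ 0) (x : Fin n → ℝ) : β P (gv G) (Amap F G P x) = 0 := by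
  rw [Amap, β_sub_right, β_smul_right, ← sv_def, ← dd_def]
  rw [div_mul_cancel₀ _ hd, sub_self]

lemma key1' (hP : Pᵀ = P) (hd : dd G P ≠ 0) (x : Fin n → ℝ) :
    β P (Amap F G P x) (gv G) = 0 := by
  rw [β_comm hP]; exact key1 F G hd x

lemma key2 (x y : Fin n → ℝ) :
    β P (Amap F G P x) (F *ᵥ y)
      = β P (F *ᵥ x) (F *ᵥ y) - sv F G P x * sv F G P y / dd G P := by
  rw [Amap, β_sub_left, β_smul_left, ← sv_def]
  ring

lemma key3 (hP : Pᵀ = P) (hd : dd G P ≠ 0) (x y : Fin n → ℝ) :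
    β P (Amap F G P x) (Amap F G P y)
      = β P (F *ᵥ x) (F *ᵥ y) - sv F G P x * sv F G P y / dd G P := by
  rw [show Amap F G P y = F *ᵥ y - (sv F G P y / dd G P) • gv G from rfl]
  rw [β_sub_right, β_smul_right, key1' F G hP hd, mul_zero, sub_zero]
  exact key2 F G x y

lemma Amap_eq (x : Fin n → ℝ) :
    Amap F G P x = F *ᵥ x + (-(sv F G P x / dd G P)) • gv G := by
  rw [Amap, neg_smul, ← sub_eq_add_neg]

lemma expand_q (hP : Pᵀ = P) (x : Fin n → ℝ) (u : ℝ) :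
    β P (F *ᵥ x + u • gv G) (F *ᵥ x + u • gv G)
      = β P (F *ᵥ x) (F *ᵥ x) + 2 * u * sv F G P x + u ^ 2 * dd G P := by
  rw [β_add_left, β_add_right, β_add_right, β_smul_left, β_smul_left,
    β_smul_right, β_smul_right]
  rw [β_comm hP (F *ᵥ x) (gv G), ← sv_def, ← dd_def]
  ring

lemma min_prop (hP : Pᵀ = P) (hdpos : 0 < dd G P) (x : Fin n → ℝ) (u : ℝ) :
    β P (Amap F G P x) (Amap F G P x)
      ≤ β P (F *ᵥ x + u • gv G) (F *ᵥ x + u • gv G) := by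
  rw [key3 F G hP (ne_of_gt hdpos), expand_q F G hP]
  have h : sv F G P x * sv F G P x / dd G P
      = dd G P * (sv F G P x / dd G P) ^ 2 := by
    field_simp
  have h2 : 2 * u * sv F G P x = 2 * (u * (dd G P * (sv F G P x / dd G P))) := by
    rw [mul_div_cancel₀ _ (ne_of_gt hdpos)]; ring
  rw [h, h2]
  nlinarith [sq_nonneg (u + sv F G P x / dd G P), hdpos]

end Amap


lemma posdef_q {M : Matrix (Fin n) (Fin n) ℝ} (hM : M.PosDef) {x : Fin n → ℝ}
    (hx : x ≠ 0) : 0 < β M x x := by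
  simpa [β] using hM.dotProduct_mulVec_pos hx

lemma possemidef_q {M : Matrix (Fin n) (Fin n) ℝ} (hM : M.PosSemidef) (x : Fin n → ℝ) :
    0 ≤ β M x x := by
  simpa [β] using hM.dotProduct_mulVec_nonneg x

lemma isHermitian_iff_transpose {M : Matrix (Fin n) (Fin n) ℝ} :
    M.IsHermitian ↔ Mᵀ = M := by
  rw [Matrix.IsHermitian, conjTranspose_eq_transpose_of_trivial]

section Phi
variable (F : Matrix (Fin n) (Fin n) ℝ) (G : Matrix (Fin n) (Fin 1) ℝ)
  (W : Matrix (Fin n) (Fin n) ℝ)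

noncomputable def Phi (P : Matrix (Fin n) (Fin n) ℝ) : Matrix (Fin n) (Fin n) ℝ :=
  W + Fᵀ * P * F - ((Gᵀ * P * G) 0 0)⁻¹ • (Fᵀ * P * G * (Gᵀ * P * F))

lemma Phi_bilinear (P : Matrix (Fin n) (Fin n) ℝ) (x y : Fin n → ℝ) :
    β (Phi F G W P) x y
      = β W x y + β P (F *ᵥ x) (F *ᵥ y)
        - β P (F *ᵥ x) (gv G) * β P (gv G) (F *ᵥ y) * (dd G P)⁻¹ := by
  rw [β, Phi, Matrix.sub_mulVec, Matrix.add_mulVec, Matrix.smul_mulVec,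
    dotProduct_sub, dotProduct_add, dotProduct_smul]
  rw [L1 F, ← β]
  have h2 := L2 F G P x y
  rw [h2, L3 G P, ← dd_def]
  simp [smul_eq_mul]
  ring

lemma Phi_q (P : Matrix (Fin n) (Fin n) ℝ) (hP : Pᵀ = P) (hd : dd G P ≠ 0)
    (x y : Fin n → ℝ) :
    β (Phi F G W P) x y = β W x y + β P (Amap F G P x) (Amap F G P y) := by
  rw [Phi_bilinear, key3 F G hP hd]
  rw [β_comm hP (F *ᵥ x) (gv G), ← sv_def, ← sv_def, div_eq_mul_inv]
  ring

lemma Phi_transpose (P : Matrix (Fin n) (Fin n) ℝ) (hW : Wᵀ = W) (hP : Pᵀ = P) :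
    (Phi F G W P)ᵀ = Phi F G W P := by
  simp only [Phi, Matrix.transpose_sub, Matrix.transpose_add, Matrix.transpose_smul,
    Matrix.transpose_mul, Matrix.transpose_transpose, hW, hP, Matrix.mul_assoc]


lemma dd_pos {G : Matrix (Fin n) (Fin 1) ℝ} {P : Matrix (Fin n) (Fin n) ℝ}
    (hg : gv G ≠ 0) (hP : P.PosDef) : 0 < dd G P :=
  posdef_q hP hg

lemma Phi_posdef (P : Matrix (Fin n) (Fin n) ℝ) (hg : gv G ≠ 0) (hW : W.PosDef)
    (hP : P.PosDef) : (Phi F G W P).PosDef := by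
  have hPt : Pᵀ = P := isHermitian_iff_transpose.mp hP.isHermitian
  have hd : dd G P ≠ 0 := ne_of_gt (dd_pos hg hP)
  refine Matrix.PosDef.of_dotProduct_mulVec_pos ?_ ?_
  · exact isHermitian_iff_transpose.mpr
      (Phi_transpose F G W P (isHermitian_iff_transpose.mp hW.isHermitian) hPt)
  · intro x hx
    have h := Phi_q F G W P hPt hd x x
    have h1 : 0 < β W x x := posdef_q hW hx
    have h2 : 0 ≤ β P (Amap F G P x) (Amap F G P x) :=
      possemidef_q hP.posSemidef _
    have : 0 < β (Phi F G W P) x x := by rw [h]; linarith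
    simpa [β] using this

/-- Phi is monotone on positive definite matrices (in the quadratic-form order). -/
lemma Phi_mono (P P' : Matrix (Fin n) (Fin n) ℝ) (hg : gv G ≠ 0)
    (hP : P.PosDef) (hP' : P'.PosDef)
    (hle : ∀ z, β P z z ≤ β P' z z) (x : Fin n → ℝ) :
    β (Phi F G W P) x x ≤ β (Phi F G W P') x x := by
  have hPt : Pᵀ = P := isHermitian_iff_transpose.mp hP.isHermitian
  have hP't : P'ᵀ = P' := isHermitian_iff_transpose.mp hP'.isHermitian
  have hd : 0 < dd G P := dd_pos hg hP
  have hd' : 0 < dd G P' := dd_pos hg hP'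
  rw [Phi_q F G W P hPt (ne_of_gt hd) x x, Phi_q F G W P' hP't (ne_of_gt hd') x x]
  have step1 : β P (Amap F G P x) (Amap F G P x)
      ≤ β P (Amap F G P' x) (Amap F G P' x) := by
    have := min_prop F G hPt hd x (-(sv F G P' x / dd G P'))
    rwa [← Amap_eq F G (P := P')] at this
  have step2 : β P (Amap F G P' x) (Amap F G P' x)
      ≤ β P' (Amap F G P' x) (Amap F G P' x) := hle _
  linarith

/-- choosing u = 0 in the minimization -/
lemma Phi_upper (P : Matrix (Fin n) (Fin n) ℝ) (hP : P.PosDef) (hg : gv G ≠ 0)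
    (x : Fin n → ℝ) :
    β (Phi F G W P) x x ≤ β W x x + β P (F *ᵥ x) (F *ᵥ x) := by
  have hPt : Pᵀ = P := isHermitian_iff_transpose.mp hP.isHermitian
  have hd : 0 < dd G P := dd_pos hg hP
  rw [Phi_q F G W P hPt (ne_of_gt hd) x x]
  have := min_prop F G hPt hd x 0
  simpa using this

/-- lower bound by W -/
lemma Phi_lower (P : Matrix (Fin n) (Fin n) ℝ) (hP : P.PosDef) (hg : gv G ≠ 0)
    (x : Fin n → ℝ) :
    β W x x ≤ β (Phi F G W P) x x := by
  have hPt : Pᵀ = P := isHermitian_iff_transpose.mp hP.isHermitian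
  have hd : 0 < dd G P := dd_pos hg hP
  rw [Phi_q F G W P hPt (ne_of_gt hd) x x]
  have := possemidef_q hP.posSemidef (Amap F G P x)
  linarith

lemma Phi_fixed_iff (P : Matrix (Fin n) (Fin n) ℝ) :
    (P - Fᵀ * P * F + ((Gᵀ * P * G) 0 0)⁻¹ • (Fᵀ * P * G * (Gᵀ * P * F)) = W)
      ↔ Phi F G W P = P := by
  rw [Phi]
  constructor
  · intro h; rw [← h]; abel
  · intro h; nth_rewrite 1 [← h]; abel

end Phi

lemma polar {M : Matrix (Fin n) (Fin n) ℝ} (hM : Mᵀ = M) (x y : Fin n → ℝ) :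
    β M x y = (β M (x + y) (x + y) - β M x x - β M y y) / 2 := by
  rw [β_add_left, β_add_right, β_add_right, β_comm hM y x]
  ring

section Exist
variable (F : Matrix (Fin n) (Fin n) ℝ) (G : Matrix (Fin n) (Fin 1) ℝ)
  (W : Matrix (Fin n) (Fin n) ℝ)

/-- the Riccati iteration -/
noncomputable def Pseq (k : ℕ) : Matrix (Fin n) (Fin n) ℝ := (Phi F G W)^[k] W

lemma Pseq_zero : Pseq F G W 0 = W := rfl

lemma Pseq_succ (k : ℕ) : Pseq F G W (k + 1) = Phi F G W (Pseq F G W k) :=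
  Function.iterate_succ_apply' _ _ _

variable {F G W}
variable (hg : gv G ≠ 0) (hW : W.PosDef)

include hg hW

lemma Pseq_posdef (k : ℕ) : (Pseq F G W k).PosDef := by
  induction k with
  | zero => exact hW
  | succ k ih => rw [Pseq_succ]; exact Phi_posdef F G W _ hg hW ih

lemma Pseq_mono_step (k : ℕ) (x : Fin n → ℝ) :
    β (Pseq F G W k) x x ≤ β (Pseq F G W (k + 1)) x x := by
  induction k generalizing x with
  | zero =>
      rw [Pseq_succ, Pseq_zero]
      exact Phi_lower F G W W hW hg x
  | succ k ih =>
      rw [Pseq_succ, Pseq_succ]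
      exact Phi_mono F G W _ _ hg (Pseq_posdef hg hW k) (Pseq_posdef hg hW (k + 1))
        (fun z => ih z) x

lemma Pseq_mono (x : Fin n → ℝ) : Monotone fun k => β (Pseq F G W k) x x :=
  monotone_nat_of_le_succ (fun k => Pseq_mono_step hg hW k x)

variable (hFn : ∀ v : Fin n → ℝ, (fun z => F *ᵥ z)^[n] v = 0) (hn : 0 < n)

/-- the uniform upper bound -/
noncomputable def bb (F : Matrix (Fin n) (Fin n) ℝ) (W : Matrix (Fin n) (Fin n) ℝ)
    (x : Fin n → ℝ) : ℝ :=
  ∑ t ∈ Finset.range n, β W ((fun z => F *ᵥ z)^[t] x) ((fun z => F *ᵥ z)^[t] x)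

include hFn hn

omit hg hFn in
lemma bb_ge (x : Fin n → ℝ) : β W x x ≤ bb F W x := by
  have h0 : (0 : ℕ) ∈ Finset.range n := Finset.mem_range.mpr hn
  have := Finset.single_le_sum
    (f := fun t => β W ((fun z => F *ᵥ z)^[t] x) ((fun z => F *ᵥ z)^[t] x))
    (fun t _ => possemidef_q hW.posSemidef _) h0
  simpa [bb] using this

omit hg hW hn in
lemma bb_shift (x : Fin n → ℝ) : β W x x + bb F W (F *ᵥ x) = bb F W x := by
  have h1 : bb F W (F *ᵥ x)
      = ∑ t ∈ Finset.range n, β W ((fun z => F *ᵥ z)^[t + 1] x) ((fun z => F *ᵥ z)^[t + 1] x) := by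
    apply Finset.sum_congr rfl
    intro t _
    rw [Function.iterate_succ_apply]
  have h2 : β W x x + bb F W (F *ᵥ x)
      = ∑ t ∈ Finset.range (n + 1), β W ((fun z => F *ᵥ z)^[t] x) ((fun z => F *ᵥ z)^[t] x) := by
    rw [Finset.sum_range_succ', h1]
    simp [add_comm]
  rw [h2, Finset.sum_range_succ, hFn x]
  have : β W (0 : Fin n → ℝ) 0 = 0 := by simp [β]
  rw [this, add_zero, bb]

lemma Pseq_bounded (k : ℕ) (x : Fin n → ℝ) : β (Pseq F G W k) x x ≤ bb F W x := by
  induction k generalizing x with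
  | zero => exact bb_ge hW hn x
  | succ k ih =>
      rw [Pseq_succ]
      have h1 := Phi_upper F G W (Pseq F G W k) (Pseq_posdef hg hW k) hg x
      have h2 := ih (F *ᵥ x)
      have h3 := bb_shift (W := W) hFn x
      linarith


end Exist

/-- continuity of the bilinear form in the matrix argument -/
lemma beta_continuous (x y : Fin n → ℝ) :
    Continuous fun M : Matrix (Fin n) (Fin n) ℝ => β M x y := by
  simp only [β_eq_sum]
  exact continuous_finset_sum _ fun i _ => continuous_finset_sum _ fun j _ =>
    continuous_const.mul ((continuous_id.matrix_elem i j).mul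
      continuous_const)

/-- the limiting quadratic form -/
noncomputable def QQ (F : Matrix (Fin n) (Fin n) ℝ) (G : Matrix (Fin n) (Fin 1) ℝ)
    (W : Matrix (Fin n) (Fin n) ℝ) (x : Fin n → ℝ) : ℝ :=
  ⨆ k, β (Pseq F G W k) x x

/-- the limiting matrix, defined by polarization -/
noncomputable def Plim (F : Matrix (Fin n) (Fin n) ℝ) (G : Matrix (Fin n) (Fin 1) ℝ)
    (W : Matrix (Fin n) (Fin n) ℝ) : Matrix (Fin n) (Fin n) ℝ :=
  Matrix.of fun i j =>
    (QQ F G W (Pi.single i 1 + Pi.single j 1) - QQ F G W (Pi.single i 1)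
      - QQ F G W (Pi.single j 1)) / 2

section Limit
variable {F : Matrix (Fin n) (Fin n) ℝ} {G : Matrix (Fin n) (Fin 1) ℝ}
  {W : Matrix (Fin n) (Fin n) ℝ}
variable (hg : gv G ≠ 0) (hW : W.PosDef)
  (hFn : ∀ v : Fin n → ℝ, (fun z => F *ᵥ z)^[n] v = 0) (hn : 0 < n)

include hg hW hFn hn

lemma QQ_tendsto (x : Fin n → ℝ) :
    Filter.Tendsto (fun k => β (Pseq F G W k) x x) atTop (𝓝 (QQ F G W x)) := by
  apply tendsto_atTop_ciSup (Pseq_mono hg hW x)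
  exact ⟨bb F W x, by rintro r ⟨k, rfl⟩; exact Pseq_bounded hg hW hFn hn k x⟩

omit hFn hn in
lemma Pseq_transpose (k : ℕ) : (Pseq F G W k)ᵀ = Pseq F G W k :=
  isHermitian_iff_transpose.mp (Pseq_posdef hg hW k).isHermitian

omit hFn hn in
lemma Pseq_entry_eq (k : ℕ) (i j : Fin n) :
    Pseq F G W k i j
      = (β (Pseq F G W k) (Pi.single i 1 + Pi.single j 1) (Pi.single i 1 + Pi.single j 1)
        - β (Pseq F G W k) (Pi.single i 1) (Pi.single i 1)
        - β (Pseq F G W k) (Pi.single j 1) (Pi.single j 1)) / 2 := by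
  rw [← polar (Pseq_transpose hg hW k), β_single]

lemma Plim_entry_tendsto (i j : Fin n) :
    Filter.Tendsto (fun k => Pseq F G W k i j) atTop (𝓝 (Plim F G W i j)) := by
  have h := ((QQ_tendsto hg hW hFn hn (Pi.single i 1 + Pi.single j 1)).sub
    (QQ_tendsto hg hW hFn hn (Pi.single i 1))).sub
    (QQ_tendsto hg hW hFn hn (Pi.single j 1))
  have h2 := h.div_const 2
  have heq : (fun k => Pseq F G W k i j)
      = fun k => (β (Pseq F G W k) (Pi.single i 1 + Pi.single j 1)
          (Pi.single i 1 + Pi.single j 1)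
        - β (Pseq F G W k) (Pi.single i 1) (Pi.single i 1)
        - β (Pseq F G W k) (Pi.single j 1) (Pi.single j 1)) / 2 := by
    funext k; exact Pseq_entry_eq hg hW k i j
  rw [heq]
  exact h2

lemma Pseq_tendsto :
    Filter.Tendsto (Pseq F G W) atTop (𝓝 (Plim F G W)) := by
  refine tendsto_pi_nhds.mpr ?_
  intro i
  rw [tendsto_pi_nhds]
  intro j
  exact Plim_entry_tendsto hg hW hFn hn i j

lemma Plim_q (x y : Fin n → ℝ) :
    Filter.Tendsto (fun k => β (Pseq F G W k) x y) atTop (𝓝 (β (Plim F G W) x y)) :=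
  ((beta_continuous x y).continuousAt).tendsto.comp (Pseq_tendsto hg hW hFn hn)

lemma Plim_q_eq (x : Fin n → ℝ) : β (Plim F G W) x x = QQ F G W x :=
  tendsto_nhds_unique (Plim_q hg hW hFn hn x x) (QQ_tendsto hg hW hFn hn x)

lemma Plim_ge_W (x : Fin n → ℝ) : β W x x ≤ β (Plim F G W) x x := by
  rw [Plim_q_eq hg hW hFn hn]
  have h : β (Pseq F G W 0) x x ≤ QQ F G W x := by
    apply le_ciSup (f := fun k => β (Pseq F G W k) x x)
    exact ⟨bb F W x, by rintro r ⟨k, rfl⟩; exact Pseq_bounded hg hW hFn hn k x⟩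
  simpa [Pseq_zero] using h

omit hg hW hFn hn in
lemma Plim_transpose : (Plim F G W)ᵀ = Plim F G W := by
  ext i j
  simp only [Matrix.transpose_apply, Plim, Matrix.of_apply]
  rw [add_comm (Pi.single j 1)]
  ring

lemma Plim_posdef : (Plim F G W).PosDef := by
  refine Matrix.PosDef.of_dotProduct_mulVec_pos ?_ ?_
  · exact isHermitian_iff_transpose.mpr Plim_transpose
  · intro x hx
    have h1 : 0 < β W x x := posdef_q hW hx
    have h2 := Plim_ge_W hg hW hFn hn x
    have h3 : 0 < β (Plim F G W) x x := lt_of_lt_of_le h1 h2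
    simpa [β] using h3

lemma Plim_fixed : Phi F G W (Plim F G W) = Plim F G W := by
  have hne : ((Gᵀ * Plim F G W * G) 0 0) ≠ 0 := by
    rw [L3]
    have h1 : 0 < β W (gv G) (gv G) := posdef_q hW hg
    have h2 := Plim_ge_W hg hW hFn hn (gv G)
    exact ne_of_gt (lt_of_lt_of_le h1 h2)
  have hGPG : Continuous fun P : Matrix (Fin n) (Fin n) ℝ => Gᵀ * P * G :=
    (continuous_const.matrix_mul continuous_id).matrix_mul continuous_const
  have hscalar : Continuous fun P : Matrix (Fin n) (Fin n) ℝ => (Gᵀ * P * G) 0 0 :=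
    (continuous_apply (0 : Fin 1)).comp ((continuous_apply (0 : Fin 1)).comp hGPG)
  have hA : Continuous fun P : Matrix (Fin n) (Fin n) ℝ => Fᵀ * P * F :=
    (continuous_const.matrix_mul continuous_id).matrix_mul continuous_const
  have hB : Continuous fun P : Matrix (Fin n) (Fin n) ℝ => Fᵀ * P * G * (Gᵀ * P * F) :=
    (((continuous_const.matrix_mul continuous_id).matrix_mul continuous_const).matrix_mul
      (((continuous_const.matrix_mul continuous_id).matrix_mul continuous_const)))
  have hinv : ContinuousAt (fun P : Matrix (Fin n) (Fin n) ℝ => ((Gᵀ * P * G) 0 0)⁻¹)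
      (Plim F G W) := hscalar.continuousAt.inv₀ hne
  have hPhi : ContinuousAt (Phi F G W) (Plim F G W) := by
    have hrepr : Phi F G W = fun P : Matrix (Fin n) (Fin n) ℝ =>
        W + Fᵀ * P * F - ((Gᵀ * P * G) 0 0)⁻¹ • (Fᵀ * P * G * (Gᵀ * P * F)) := rfl
    rw [hrepr]
    exact (continuousAt_const.add hA.continuousAt).sub (hinv.smul hB.continuousAt)
  have h1 : Filter.Tendsto (fun k => Pseq F G W (k + 1)) atTop (𝓝 (Plim F G W)) :=
    (tendsto_add_atTop_iff_nat 1).mpr (Pseq_tendsto hg hW hFn hn)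
  have h2 : Filter.Tendsto (fun k => Phi F G W (Pseq F G W k)) atTop
      (𝓝 (Phi F G W (Plim F G W))) :=
    hPhi.tendsto.comp (Pseq_tendsto hg hW hFn hn)
  have h3 : (fun k => Pseq F G W (k + 1)) = fun k => Phi F G W (Pseq F G W k) := by
    funext k; exact Pseq_succ F G W k
  rw [h3] at h1
  exact tendsto_nhds_unique h2 h1

end Limit

lemma β_zero_left (M : Matrix (Fin n) (Fin n) ℝ) (y : Fin n → ℝ) : β M 0 y = 0 := by
  simp [β]

lemma q_homog (M : Matrix (Fin n) (Fin n) ℝ) (t : ℝ) (x : Fin n → ℝ) :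
    β M (t • x) (t • x) = t ^ 2 * β M x x := by
  rw [β_smul_left, β_smul_right]; ring

lemma abs_β_le (M : Matrix (Fin n) (Fin n) ℝ) (x y : Fin n → ℝ) :
    |β M x y| ≤ (∑ i, ∑ j, |M i j|) * (‖x‖ * ‖y‖) := by
  rw [β_eq_sum]
  calc |∑ i, ∑ j, x i * (M i j * y j)|
      ≤ ∑ i, |∑ j, x i * (M i j * y j)| := Finset.abs_sum_le_sum_abs _ _
    _ ≤ ∑ i, ∑ j, |x i * (M i j * y j)| :=
        Finset.sum_le_sum fun i _ => Finset.abs_sum_le_sum_abs _ _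
    _ ≤ ∑ i, ∑ j, |M i j| * (‖x‖ * ‖y‖) := by
        apply Finset.sum_le_sum
        intro i _
        apply Finset.sum_le_sum
        intro j _
        rw [abs_mul, abs_mul]
        have hx : |x i| ≤ ‖x‖ := by
          have := norm_le_pi_norm x i
          simpa [Real.norm_eq_abs] using this
        have hy : |y j| ≤ ‖y‖ := by
          have := norm_le_pi_norm y j
          simpa [Real.norm_eq_abs] using this
        have h1 : (0:ℝ) ≤ |M i j| := abs_nonneg _
        have h3 : (0:ℝ) ≤ |y j| := abs_nonneg _
        calc |x i| * (|M i j| * |y j|) = |M i j| * (|x i| * |y j|) := by ring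
          _ ≤ |M i j| * (‖x‖ * ‖y‖) :=
              mul_le_mul_of_nonneg_left (mul_le_mul hx hy h3 (norm_nonneg x)) h1
    _ = (∑ i, ∑ j, |M i j|) * (‖x‖ * ‖y‖) := by
        rw [Finset.sum_mul]
        congr 1
        funext i
        rw [Finset.sum_mul]

lemma q_upper (M : Matrix (Fin n) (Fin n) ℝ) (x : Fin n → ℝ) :
    β M x x ≤ (∑ i, ∑ j, |M i j|) * ‖x‖ ^ 2 := by
  have := abs_β_le M x x
  have h2 := le_abs_self (β M x x)
  nlinarith [norm_nonneg x]

lemma sphere_nonempty' (hn : 0 < n) :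
    ∃ v : Fin n → ℝ, ‖v‖ = 1 := by
  haveI : Nonempty (Fin n) := Fin.pos_iff_nonempty.mp hn
  haveI : Nontrivial (Fin n → ℝ) := by
    refine ⟨0, (fun _ => 1), fun h => ?_⟩
    have := congrFun h (Fin.mk 0 hn)
    simp at this
  obtain ⟨v, hv⟩ := (NormedSpace.sphere_nonempty (E := Fin n → ℝ) (x := 0)
    (r := 1)).mpr zero_le_one
  exact ⟨v, by simpa using mem_sphere_zero_iff_norm.mp hv⟩

/-- positive definite quadratic forms are bounded below by a multiple of the norm squared -/
lemma q_lower (hn : 0 < n) {M : Matrix (Fin n) (Fin n) ℝ} (hM : M.PosDef) :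
    ∃ c > 0, ∀ x : Fin n → ℝ, c * ‖x‖ ^ 2 ≤ β M x x := by
  have hcomp : IsCompact (Metric.sphere (0 : Fin n → ℝ) 1) := isCompact_sphere 0 1
  obtain ⟨v0, hv0⟩ := sphere_nonempty' hn
  have hne : (Metric.sphere (0 : Fin n → ℝ) 1).Nonempty :=
    ⟨v0, by simpa [mem_sphere_zero_iff_norm] using hv0⟩
  have hcont : Continuous fun x : Fin n → ℝ => β M x x := by
    have : Continuous fun x : Fin n → ℝ => ∑ i, ∑ j, x i * (M i j * x j) :=
      continuous_finset_sum _ fun i _ => continuous_finset_sum _ fun j _ =>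
        (continuous_apply i).mul (continuous_const.mul (continuous_apply j))
    simpa [β_eq_sum] using this
  obtain ⟨v, hvS, hmin⟩ := hcomp.exists_isMinOn hne hcont.continuousOn
  have hv1 : ‖v‖ = 1 := mem_sphere_zero_iff_norm.mp hvS
  have hvne : v ≠ 0 := by intro h; rw [h] at hv1; simp at hv1
  refine ⟨β M v v, posdef_q hM hvne, fun x => ?_⟩
  rcases eq_or_ne x 0 with rfl | hx
  · simp [β_zero_left]
  · have ht : (0:ℝ) < ‖x‖ := norm_pos_iff.mpr hx
    set u : Fin n → ℝ := ‖x‖⁻¹ • x with hu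
    have hu1 : ‖u‖ = 1 := by
      rw [hu, norm_smul, Real.norm_eq_abs, abs_inv, abs_of_pos ht,
        inv_mul_cancel₀ (ne_of_gt ht)]
    have huS : u ∈ Metric.sphere (0 : Fin n → ℝ) 1 := by
      simpa [mem_sphere_zero_iff_norm] using hu1
    have hmin_u : β M v v ≤ β M u u := hmin huS
    have hxu : x = ‖x‖ • u := by
      rw [hu, smul_smul, mul_inv_cancel₀ (ne_of_gt ht), one_smul]
    have hq : β M x x = ‖x‖ ^ 2 * β M u u := by
      calc β M x x = β M (‖x‖ • u) (‖x‖ • u) := by rw [← hxu]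
        _ = ‖x‖ ^ 2 * β M u u := q_homog M ‖x‖ u
    nlinarith

lemma β_add_matrix (M N : Matrix (Fin n) (Fin n) ℝ) (x y : Fin n → ℝ) :
    β (M + N) x y = β M x y + β N x y := by
  simp [β, Matrix.add_mulVec, dotProduct_add]

lemma β_smul_matrix (c : ℝ) (M : Matrix (Fin n) (Fin n) ℝ) (x y : Fin n → ℝ) :
    β (c • M) x y = c * β M x y := by
  simp [β, Matrix.smul_mulVec, dotProduct_smul]

section Uniq
variable {F : Matrix (Fin n) (Fin n) ℝ} {G : Matrix (Fin n) (Fin 1) ℝ}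
  {W : Matrix (Fin n) (Fin n) ℝ} {P : Matrix (Fin n) (Fin n) ℝ}

/-- any solution of the Riccati equation satisfies the closed-loop identity -/
lemma sol_key (hg : gv G ≠ 0) (hP : P.PosDef)
    (hEq : P - Fᵀ * P * F + ((Gᵀ * P * G) 0 0)⁻¹ • (Fᵀ * P * G * (Gᵀ * P * F)) = W)
    (x y : Fin n → ℝ) :
    β P (Amap F G P x) (Amap F G P y) = β P x y - β W x y := by
  have hPt : Pᵀ = P := isHermitian_iff_transpose.mp hP.isHermitian
  have hd : 0 < dd G P := dd_pos hg hP
  have h := congrArg (fun M => β M x y) hEq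
  rw [β_add_matrix, β_sub_matrix, β_smul_matrix] at h
  rw [show β (Fᵀ * P * F) x y = β P (F *ᵥ x) (F *ᵥ y) from L1 F P x y] at h
  rw [show β (Fᵀ * P * G * (Gᵀ * P * F)) x y
    = β P (F *ᵥ x) (gv G) * β P (gv G) (F *ᵥ y) from L2 F G P x y] at h
  rw [L3 G P, ← dd_def] at h
  rw [key3 F G hPt (ne_of_gt hd)]
  rw [β_comm hPt (F *ᵥ x) (gv G), ← sv_def, ← sv_def] at h
  rw [div_eq_mul_inv]
  linarith

/-- solutions dominate W -/
lemma sol_ge_W (hg : gv G ≠ 0) (hP : P.PosDef)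
    (hEq : P - Fᵀ * P * F + ((Gᵀ * P * G) 0 0)⁻¹ • (Fᵀ * P * G * (Gᵀ * P * F)) = W)
    (x : Fin n → ℝ) : β W x x ≤ β P x x := by
  have h := sol_key hg hP hEq x x
  have h2 := possemidef_q hP.posSemidef (Amap F G P x)
  linarith

/-- contraction factor for a solution -/
lemma sol_contract (hn : 0 < n) (hg : gv G ≠ 0) (hW : W.PosDef) (hP : P.PosDef)
    (hEq : P - Fᵀ * P * F + ((Gᵀ * P * G) 0 0)⁻¹ • (Fᵀ * P * G * (Gᵀ * P * F)) = W) :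
    ∃ r : ℝ, 0 ≤ r ∧ r < 1 ∧
      ∀ x, β P (Amap F G P x) (Amap F G P x) ≤ r * β P x x := by
  obtain ⟨c, hc, hcW⟩ := q_lower hn hW
  set Cp := (∑ i, ∑ j, |P i j|) + 1 with hCp
  have hCp_pos : 0 < Cp := by
    have : (0:ℝ) ≤ ∑ i, ∑ j, |P i j| :=
      Finset.sum_nonneg fun i _ => Finset.sum_nonneg fun j _ => abs_nonneg _
    linarith
  have hub : ∀ x, β P x x ≤ Cp * ‖x‖ ^ 2 := by
    intro x
    have h1 := q_upper P x
    have h2 : (0:ℝ) ≤ ‖x‖ ^ 2 := sq_nonneg _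
    nlinarith
  refine ⟨1 - c / Cp, ?_, ?_, ?_⟩
  · -- 0 ≤ 1 - c/Cp i.e. c ≤ Cp
    obtain ⟨v, hv⟩ := sphere_nonempty' hn
    have h1 : c * ‖v‖ ^ 2 ≤ β W v v := hcW v
    have h2 : β W v v ≤ β P v v := sol_ge_W hg hP hEq v
    have h3 : β P v v ≤ Cp * ‖v‖ ^ 2 := hub v
    rw [hv] at h1 h3
    simp at h1 h3
    have hcle : c ≤ Cp := by linarith
    have : c / Cp ≤ 1 := by
      rw [div_le_one hCp_pos]; exact hcle
    linarith
  · have : 0 < c / Cp := div_pos hc hCp_pos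
    linarith
  · intro x
    have h1 := sol_key hg hP hEq x x
    have h2 : (c / Cp) * β P x x ≤ β W x x := by
      have hb1 : β P x x ≤ Cp * ‖x‖ ^ 2 := hub x
      have hb2 : c * ‖x‖ ^ 2 ≤ β W x x := hcW x
      have hpos : 0 ≤ c / Cp := le_of_lt (div_pos hc hCp_pos)
      have : (c / Cp) * β P x x ≤ (c / Cp) * (Cp * ‖x‖ ^ 2) :=
        mul_le_mul_of_nonneg_left hb1 hpos
      have heq2 : (c / Cp) * (Cp * ‖x‖ ^ 2) = c * ‖x‖ ^ 2 := by
        field_simp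
      linarith
    have := h1
    nlinarith [possemidef_q hP.posSemidef x]

variable {R : Matrix (Fin n) (Fin n) ℝ}

/-- Stein-type step -/
lemma stein_step (hg : gv G ≠ 0) (hP : P.PosDef) (hR : R.PosDef)
    (hEqP : P - Fᵀ * P * F + ((Gᵀ * P * G) 0 0)⁻¹ • (Fᵀ * P * G * (Gᵀ * P * F)) = W)
    (hEqR : R - Fᵀ * R * F + ((Gᵀ * R * G) 0 0)⁻¹ • (Fᵀ * R * G * (Gᵀ * R * F)) = W)
    (x y : Fin n → ℝ) :
    β P x y - β R x y
      = β P (Amap F G P x) (Amap F G R y) - β R (Amap F G P x) (Amap F G R y) := by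
  have hPt : Pᵀ = P := isHermitian_iff_transpose.mp hP.isHermitian
  have hRt : Rᵀ = R := isHermitian_iff_transpose.mp hR.isHermitian
  have hdP : 0 < dd G P := dd_pos hg hP
  have hdR : 0 < dd G R := dd_pos hg hR
  have hdiffy : Amap F G R y - Amap F G P y
      = (sv F G P y / dd G P - sv F G R y / dd G R) • gv G := by
    funext i
    simp [Amap, Pi.sub_apply, Pi.smul_apply, sub_smul]
    ring
  have hdiffx : Amap F G P x - Amap F G R x
      = (sv F G R x / dd G R - sv F G P x / dd G P) • gv G := by
    funext i
    simp [Amap, Pi.sub_apply, Pi.smul_apply, sub_smul]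
    ring
  have e1 : β P (Amap F G P x) (Amap F G R y) = β P (Amap F G P x) (Amap F G P y) := by
    have h := β_sub_right P (Amap F G P x) (Amap F G R y) (Amap F G P y)
    rw [hdiffy, β_smul_right, key1' F G hPt (ne_of_gt hdP), mul_zero] at h
    linarith
  have e2 : β R (Amap F G P x) (Amap F G R y) = β R (Amap F G R x) (Amap F G R y) := by
    have h := β_sub_left R (Amap F G P x) (Amap F G R x) (Amap F G R y)
    rw [hdiffx, β_smul_left, key1 F G (ne_of_gt hdR), mul_zero] at h
    linarith
  rw [e1, e2, sol_key hg hP hEqP, sol_key hg hR hEqR]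
  ring

lemma stein_iter (hg : gv G ≠ 0) (hP : P.PosDef) (hR : R.PosDef)
    (hEqP : P - Fᵀ * P * F + ((Gᵀ * P * G) 0 0)⁻¹ • (Fᵀ * P * G * (Gᵀ * P * F)) = W)
    (hEqR : R - Fᵀ * R * F + ((Gᵀ * R * G) 0 0)⁻¹ • (Fᵀ * R * G * (Gᵀ * R * F)) = W)
    (k : ℕ) (x y : Fin n → ℝ) :
    β P x y - β R x y
      = β P ((fun z => Amap F G P z)^[k] x) ((fun z => Amap F G R z)^[k] y)
        - β R ((fun z => Amap F G P z)^[k] x) ((fun z => Amap F G R z)^[k] y) := by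
  induction k generalizing x y with
  | zero => simp
  | succ k ih =>
      rw [ih x y, Function.iterate_succ_apply', Function.iterate_succ_apply']
      exact stein_step hg hP hR hEqP hEqR _ _

/-- decay of iterates -/
lemma decay_iter (hP : P.PosDef) {r : ℝ} (hr0 : 0 ≤ r)
    (hcontr : ∀ x, β P (Amap F G P x) (Amap F G P x) ≤ r * β P x x)
    (k : ℕ) (x : Fin n → ℝ) :
    β P ((fun z => Amap F G P z)^[k] x) ((fun z => Amap F G P z)^[k] x)
      ≤ r ^ k * β P x x := by
  induction k with
  | zero => simp
  | succ k ih =>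
      rw [Function.iterate_succ_apply']
      calc β P (Amap F G P ((fun z => Amap F G P z)^[k] x))
            (Amap F G P ((fun z => Amap F G P z)^[k] x))
          ≤ r * β P ((fun z => Amap F G P z)^[k] x) ((fun z => Amap F G P z)^[k] x) :=
            hcontr _
        _ ≤ r * (r ^ k * β P x x) := mul_le_mul_of_nonneg_left ih hr0
        _ = r ^ (k + 1) * β P x x := by ring


lemma sol_unique (hn : 0 < n) (hg : gv G ≠ 0) (hW : W.PosDef)
    (hP : P.PosDef)
    (hEqP : P - Fᵀ * P * F + ((Gᵀ * P * G) 0 0)⁻¹ • (Fᵀ * P * G * (Gᵀ * P * F)) = W)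
    (hR : R.PosDef)
    (hEqR : R - Fᵀ * R * F + ((Gᵀ * R * G) 0 0)⁻¹ • (Fᵀ * R * G * (Gᵀ * R * F)) = W) :
    P = R := by
  obtain ⟨rP, hrP0, hrP1, hcP⟩ := sol_contract hn hg hW hP hEqP
  obtain ⟨rR, hrR0, hrR1, hcR⟩ := sol_contract hn hg hW hR hEqR
  obtain ⟨cP, hcPpos, hlowP⟩ := q_lower hn hP
  obtain ⟨cR, hcRpos, hlowR⟩ := q_lower hn hR
  set ρ := max rP rR with hρ
  have hρ0 : 0 ≤ ρ := le_trans hrP0 (le_max_left _ _)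
  have hρ1 : ρ < 1 := max_lt hrP1 hrR1
  have key : ∀ x y, β P x y = β R x y := by
    intro x y
    set SP := ∑ i, ∑ j, |P i j| with hSP
    set SR := ∑ i, ∑ j, |R i j| with hSR
    have hSPnn : 0 ≤ SP :=
      Finset.sum_nonneg fun i _ => Finset.sum_nonneg fun j _ => abs_nonneg _
    have hSRnn : 0 ≤ SR :=
      Finset.sum_nonneg fun i _ => Finset.sum_nonneg fun j _ => abs_nonneg _
    have hqPx : 0 ≤ β P x x := possemidef_q hP.posSemidef x
    have hqRy : 0 ≤ β R y y := possemidef_q hR.posSemidef y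
    set K := (SP + SR) * (β P x x / cP + β R y y / cR) / 2 with hK
    have hbound : ∀ k : ℕ, |β P x y - β R x y| ≤ K * ρ ^ k := by
      intro k
      set X := (fun z => Amap F G P z)^[k] x with hX
      set Y := (fun z => Amap F G R z)^[k] y with hY
      have hD := stein_iter hg hP hR hEqP hEqR k x y
      have habs : |β P x y - β R x y| ≤ |β P X Y| + |β R X Y| := by
        rw [hD]; exact abs_sub _ _
      have hβP := abs_β_le P X Y
      have hβR := abs_β_le R X Y
      have hXq : cP * ‖X‖ ^ 2 ≤ ρ ^ k * β P x x := by
        have h1 := hlowP X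
        have h2 := decay_iter hP hrP0 hcP k x
        have h3 : rP ^ k ≤ ρ ^ k := pow_le_pow_left₀ hrP0 (le_max_left _ _) k
        have h4 : rP ^ k * β P x x ≤ ρ ^ k * β P x x :=
          mul_le_mul_of_nonneg_right h3 hqPx
        calc cP * ‖X‖ ^ 2 ≤ β P X X := h1
          _ ≤ rP ^ k * β P x x := h2
          _ ≤ ρ ^ k * β P x x := h4
      have hYq : cR * ‖Y‖ ^ 2 ≤ ρ ^ k * β R y y := by
        have h1 := hlowR Y
        have h2 := decay_iter hR hrR0 hcR k y
        have h3 : rR ^ k ≤ ρ ^ k := pow_le_pow_left₀ hrR0 (le_max_right _ _) k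
        have h4 : rR ^ k * β R y y ≤ ρ ^ k * β R y y :=
          mul_le_mul_of_nonneg_right h3 hqRy
        calc cR * ‖Y‖ ^ 2 ≤ β R Y Y := h1
          _ ≤ rR ^ k * β R y y := h2
          _ ≤ ρ ^ k * β R y y := h4
      have hX2 : ‖X‖ ^ 2 ≤ ρ ^ k * β P x x / cP := by
        rw [le_div_iff₀ hcPpos]; linarith
      have hY2 : ‖Y‖ ^ 2 ≤ ρ ^ k * β R y y / cR := by
        rw [le_div_iff₀ hcRpos]; linarith
      have hprod : ‖X‖ * ‖Y‖ ≤ (‖X‖ ^ 2 + ‖Y‖ ^ 2) / 2 := by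
        nlinarith [sq_nonneg (‖X‖ - ‖Y‖)]
      have hnn : 0 ≤ ‖X‖ * ‖Y‖ := mul_nonneg (norm_nonneg _) (norm_nonneg _)
      have hKρ : K * ρ ^ k
          = (SP + SR) * (ρ ^ k * β P x x / cP + ρ ^ k * β R y y / cR) / 2 := by
        rw [hK]
        field_simp
      calc |β P x y - β R x y| ≤ |β P X Y| + |β R X Y| := habs
        _ ≤ SP * (‖X‖ * ‖Y‖) + SR * (‖X‖ * ‖Y‖) := add_le_add hβP hβR
        _ = (SP + SR) * (‖X‖ * ‖Y‖) := by ring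
        _ ≤ (SP + SR) * ((‖X‖ ^ 2 + ‖Y‖ ^ 2) / 2) :=
            mul_le_mul_of_nonneg_left hprod (by linarith)
        _ ≤ (SP + SR) * ((ρ ^ k * β P x x / cP + ρ ^ k * β R y y / cR) / 2) := by
            apply mul_le_mul_of_nonneg_left _ (by linarith : (0:ℝ) ≤ SP + SR)
            have := add_le_add hX2 hY2
            linarith
        _ = K * ρ ^ k := by rw [hKρ]; ring
    have htend : Filter.Tendsto (fun k : ℕ => K * ρ ^ k) atTop (𝓝 0) := by
      have h := tendsto_pow_atTop_nhds_zero_of_lt_one hρ0 hρ1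
      have h2 := h.const_mul K
      simpa using h2
    have hle : |β P x y - β R x y| ≤ 0 := ge_of_tendsto' htend hbound
    have := abs_nonneg (β P x y - β R x y)
    have : |β P x y - β R x y| = 0 := le_antisymm hle this
    have := abs_eq_zero.mp this
    linarith
  ext i j
  have h := key (Pi.single i 1) (Pi.single j 1)
  rwa [β_single, β_single] at h

end Uniq
end Stmt13Aux

open Stmt13Aux

theorem stmt13 {n : ℕ} (hn : 0 < n)
    (F : Matrix (Fin n) (Fin n) ℝ)
    (hF : ∀ i j : Fin n, F i j = if (i : ℕ) = (j : ℕ) + 1 then 1 else 0)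
    (G : Matrix (Fin n) (Fin 1) ℝ)
    (hG : ∀ i : Fin n, G i 0 = if (i : ℕ) = 0 then 1 else 0)
    (W : Matrix (Fin n) (Fin n) ℝ) (hW : W.PosDef) :
    ∃! P : Matrix (Fin n) (Fin n) ℝ, P.PosDef ∧
      P - Fᵀ * P * F + ((Gᵀ * P * G) 0 0)⁻¹ • (Fᵀ * P * G * (Gᵀ * P * F)) = W := by
  have hg : gv G ≠ 0 := gv_ne_zero hn hG
  have hFn : ∀ v : Fin n → ℝ, (fun z => F *ᵥ z)^[n] v = 0 := shift_iter_n hF hn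
  have hPD : (Plim F G W).PosDef := Plim_posdef hg hW hFn hn
  have hEq : Plim F G W - Fᵀ * Plim F G W * F
      + ((Gᵀ * Plim F G W * G) 0 0)⁻¹
        • (Fᵀ * Plim F G W * G * (Gᵀ * Plim F G W * F)) = W :=
    (Phi_fixed_iff F G W (Plim F G W)).mpr (Plim_fixed hg hW hFn hn)
  refine ⟨Plim F G W, ⟨hPD, hEq⟩, ?_⟩
  rintro Q ⟨hQPD, hQEq⟩
  exact sol_unique hn hg hW hQPD hQEq hPD hEq
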